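/- Let χ be a Dirichlet character modulo d and χ* the character modulo q it induces, where d | q. Then τ(χ*) = μ(q/d) χ(q/d) τ(χ), where τ denotes the Gauss sum. -/

import Mathlib

open Finset

/-- The additive character `e(x) = exp(2πix)`. -/
noncomputable def e (x : ℝ) : ℂ := Complex.exp (2 * Real.pi * Complex.I * x)

/-- The Gauss sum `τ(ψ) = ∑_{h mod m} ψ(h) e(h/m)` of a Dirichlet character mod `m`. -/
noncomputable def gaussS {m : ℕ} [NeZero m] (ψ : DirichletCharacter ℂ m) : ℂ :=
  ∑ h : ZMod m, ψ h * e ((h.val : ℝ) / m)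

lemma e_add (x y : ℝ) : e (x + y) = e x * e y := by
  simp [e, mul_add, Complex.exp_add]

lemma e_nat (n : ℕ) : e n = 1 := by
  have := Complex.exp_int_mul_two_pi_mul_I (n : ℤ)
  simp only [e]
  rw [show (2 * (Real.pi:ℂ) * Complex.I * (n:ℝ) : ℂ) = (n:ℤ) * (2 * Real.pi * Complex.I) by push_cast; ring]
  exact this

lemma e_pow (n : ℕ) (x : ℝ) : e (n * x) = (e x) ^ n := by
  simp only [e, ← Complex.exp_nat_mul]
  congr 1
  push_cast
  ring

lemma e_one_div_ne_one {M : ℕ} (hM : 2 ≤ M) : e (1 / M) ≠ 1 := by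
  intro h
  rw [e, Complex.exp_eq_one_iff] at h
  obtain ⟨n, hn⟩ := h
  have hpi : (2 * Real.pi * Complex.I : ℂ) ≠ 0 := by
    simp [Real.pi_ne_zero, Complex.I_ne_zero]
  rw [mul_comm (n:ℂ)] at hn
  have h2 : ((1 / M : ℝ) : ℂ) = (n : ℂ) := mul_left_cancel₀ hpi hn
  have h3 : (1 / M : ℝ) = (n : ℤ) := by exact_mod_cast h2
  have hM0 : (0:ℝ) < 1 / M := by positivity
  have hM1 : (1 / M : ℝ) < 1 := by
    rw [div_lt_one (by positivity)]
    exact_mod_cast hM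
  rw [h3] at hM0 hM1
  have : (0:ℤ) < n := by exact_mod_cast hM0
  have : (n:ℤ) < 1 := by exact_mod_cast hM1
  omega

lemma sum_e_eq_zero {M : ℕ} (hM : 2 ≤ M) : ∑ t ∈ range M, e (t / M) = 0 := by
  have h : ∀ t ∈ range M, e ((t:ℝ) / M) = (e (1 / M)) ^ t := by
    intro t _
    rw [← e_pow]
    congr 1
    field_simp
  rw [sum_congr rfl h, geom_sum_eq (e_one_div_ne_one hM)]
  have : (e (1/M)) ^ M = 1 := by
    rw [← e_pow]
    have h2 : (M:ℝ) * (1 / M) = ((1:ℕ):ℝ) := by field_simp; norm_num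
    rw [h2, e_nat]
  rw [this]
  simp

lemma gaussS_eq {m : ℕ} [NeZero m] (ψ : DirichletCharacter ℂ m) :
    gaussS ψ = ∑ n ∈ range m, ψ (n : ZMod m) * e ((n : ℝ) / m) := by
  rw [gaussS]
  refine Finset.sum_nbij' (fun h => h.val) (fun n => (n : ZMod m)) ?_ ?_ ?_ ?_ ?_
  · intro a _; exact mem_range.mpr (ZMod.val_lt a)
  · intro n _; exact mem_univ _
  · intro a _; exact ZMod.natCast_rightInverse a
  · intro n hn; exact ZMod.val_cast_of_lt (mem_range.mp hn)
  · intro a _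
    rw [show ((a.val : ℕ) : ZMod m) = a from ZMod.natCast_rightInverse a]

lemma sum_dvd_reindex (q c : ℕ) (hc0 : 0 < c) (hc : c ∣ q) (f : ℕ → ℂ) :
    ∑ n ∈ (range q).filter (c ∣ ·), f n = ∑ m ∈ range (q / c), f (c * m) := by
  refine Finset.sum_nbij' (fun n => n / c) (fun m => c * m) ?_ ?_ ?_ ?_ ?_
  · intro n hn
    simp only [mem_filter, mem_range] at hn
    exact mem_range.mpr (Nat.div_lt_div_of_lt_of_dvd hc hn.1)
  · intro m hm
    simp only [mem_range] at hm
    simp only [mem_filter, mem_range]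
    exact ⟨(Nat.lt_div_iff_mul_lt' hc m).mp hm, Dvd.intro m rfl⟩
  · intro n hn
    simp only [mem_filter] at hn
    exact Nat.mul_div_cancel' hn.2
  · intro m _; exact Nat.mul_div_cancel_left m hc0
  · intro n hn
    simp only [mem_filter] at hn
    rw [Nat.mul_div_cancel' hn.2]

lemma moebius_divisor_sum (n : ℕ) :
    (∑ c ∈ n.divisors, ((ArithmeticFunction.moebius c : ℤ) : ℂ)) = if n = 1 then 1 else 0 := by
  have h := congrArg (fun f => f n) ArithmeticFunction.moebius_mul_coe_zeta
  simp only [ArithmeticFunction.coe_mul_zeta_apply, ArithmeticFunction.one_apply] at h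
  rw [← Int.cast_sum, h]
  split <;> simp

lemma sum_block {d : ℕ} [NeZero d] (χ : DirichletCharacter ℂ d) {M : ℕ} (hdM : d ∣ M)
    (hlt : d < M) :
    ∑ m ∈ range M, χ ((m : ℕ) : ZMod d) * e ((m : ℝ) / M) = 0 := by
  obtain ⟨K, rfl⟩ := hdM
  have hd0 : 0 < d := Nat.pos_of_ne_zero (NeZero.ne d)
  have hK2 : 2 ≤ K := by
    by_contra hle
    push_neg at hle
    interval_cases K <;> omega
  have key : ∑ m ∈ range (d*K), χ ((m : ℕ) : ZMod d) * e ((m:ℝ) / (d*K))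
      = ∑ p ∈ range d ×ˢ range K, χ ((p.1 : ℕ) : ZMod d) * (e ((p.1:ℝ) / (d*K)) * e ((p.2:ℝ) / K)) := by
    refine Finset.sum_nbij' (fun m => (m % d, m / d)) (fun p => p.1 + d * p.2) ?_ ?_ ?_ ?_ ?_
    · intro m hm
      simp only [mem_range] at hm
      simp only [mem_product, mem_range]
      exact ⟨Nat.mod_lt _ hd0, Nat.div_lt_of_lt_mul hm⟩
    · intro p hp
      simp only [mem_product, mem_range] at hp
      simp only [mem_range]
      have h2 : d * (p.2 + 1) ≤ d * K := Nat.mul_le_mul_left d (Nat.succ_le_of_lt hp.2)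
      have h3 : d * (p.2 + 1) = d * p.2 + d := by ring
      omega
    · intro m _
      exact Nat.mod_add_div m d
    · intro p hp
      simp only [mem_product, mem_range] at hp
      have h1 : (p.1 + d * p.2) % d = p.1 := by
        rw [Nat.add_mul_mod_self_left, Nat.mod_eq_of_lt hp.1]
      have h2 : (p.1 + d * p.2) / d = p.2 := by
        rw [Nat.add_mul_div_left _ _ hd0, Nat.div_eq_of_lt hp.1, zero_add]
      exact Prod.ext h1 h2
    · intro m _
      have hcast : ((m % d : ℕ) : ZMod d) = (m : ZMod d) := ZMod.natCast_mod m d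
      rw [hcast, ← e_add]
      congr 2
      have hm : (m : ℝ) = ((m % d : ℕ) : ℝ) + (d : ℝ) * ((m / d : ℕ) : ℝ) := by
        exact_mod_cast congrArg (Nat.cast : ℕ → ℝ) (Nat.mod_add_div m d).symm
      rw [hm]
      have hd' : (d:ℝ) ≠ 0 := Nat.cast_ne_zero.mpr hd0.ne'
      have hK' : (K:ℝ) ≠ 0 := by positivity
      field_simp
  push_cast
  rw [key, Finset.sum_product]
  have : ∀ a ∈ range d, ∑ t ∈ range K, χ ((a:ℕ) : ZMod d) * (e ((a:ℝ)/(d*K)) * e ((t:ℝ)/K)) = 0 := by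
    intro a _
    have : ∀ t ∈ range K, χ ((a:ℕ) : ZMod d) * (e ((a:ℝ)/(d*K)) * e ((t:ℝ)/K))
        = (χ ((a:ℕ) : ZMod d) * e ((a:ℝ)/(d*K))) * e ((t:ℝ)/K) := by
      intro t _; ring
    rw [sum_congr rfl this, ← mul_sum, sum_e_eq_zero hK2, mul_zero]
  rw [sum_congr rfl this, sum_const_zero]

/-- for `χ` primitive modulo `d` and `d | q`, the Gauss sum of the induced
character `χ*` modulo `q` satisfies `τ(χ*) = μ(q/d) χ(q/d) τ(χ)`. -/
theorem gauss_sum_induced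
    (d q : ℕ) [NeZero d] [NeZero q] (hdq : d ∣ q)
    (χ : DirichletCharacter ℂ d) (hχ : χ.IsPrimitive) :
    gaussS (DirichletCharacter.changeLevel hdq χ)
      = ((ArithmeticFunction.moebius (q / d) : ℤ) : ℂ) * χ (((q / d : ℕ) : ZMod d)) * gaussS χ := by
  classical
  set k := q / d with hk
  have hd0 : 0 < d := Nat.pos_of_ne_zero (NeZero.ne d)
  have hq0 : 0 < q := Nat.pos_of_ne_zero (NeZero.ne q)
  have hq : q = d * k := (Nat.mul_div_cancel' hdq).symm
  have hk0 : 0 < k := by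
    rcases Nat.eq_zero_or_pos k with h | h
    · rw [h, mul_zero] at hq; omega
    · exact h
  -- pointwise description of the induced character
  have step1 : ∀ n : ℕ, (DirichletCharacter.changeLevel hdq χ) ((n : ZMod q))
      = (if Nat.gcd n k = 1 then (1:ℂ) else 0) * χ ((n : ZMod d)) := by
    intro n
    by_cases hnq : Nat.Coprime n q
    · have hu : IsUnit ((n : ZMod q)) := (ZMod.isUnit_iff_coprime n q).mpr hnq
      obtain ⟨u, hu⟩ := hu
      have hnk : Nat.gcd n k = 1 := by
        rw [hq] at hnq
        exact (Nat.coprime_mul_iff_right.mp hnq).2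
      rw [if_pos hnk, one_mul, ← hu, DirichletCharacter.changeLevel_eq_cast_of_dvd χ hdq u, hu]
      congr 1
      exact ZMod.cast_natCast hdq n
    · have h0 : (DirichletCharacter.changeLevel hdq χ) ((n : ZMod q)) = 0 := by
        apply (DirichletCharacter.changeLevel hdq χ).map_nonunit
        rw [ZMod.isUnit_iff_coprime]
        exact hnq
      rw [h0]
      by_cases hnk : Nat.gcd n k = 1
      · have hnd : ¬ Nat.Coprime n d := by
          intro hnd
          exact hnq (by rw [hq]; exact Nat.Coprime.mul_right hnd hnk)
        rw [if_pos hnk, one_mul]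
        refine (χ.map_nonunit ?_).symm
        rw [ZMod.isUnit_iff_coprime]
        exact hnd
      · rw [if_neg hnk, zero_mul]
  have hdivs : ∀ n : ℕ, (Nat.gcd n k).divisors = k.divisors.filter (· ∣ n) := by
    intro n
    ext c
    simp only [Nat.mem_divisors, mem_filter]
    constructor
    · rintro ⟨hc, -⟩
      exact ⟨⟨(Nat.dvd_gcd_iff.mp hc).2, hk0.ne'⟩, (Nat.dvd_gcd_iff.mp hc).1⟩
    · rintro ⟨⟨hck, -⟩, hcn⟩
      exact ⟨Nat.dvd_gcd hcn hck, Nat.gcd_ne_zero_right hk0.ne'⟩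
  rw [gaussS_eq, gaussS_eq]
  calc ∑ n ∈ range q, (DirichletCharacter.changeLevel hdq χ) ((n : ZMod q)) * e ((n:ℝ)/q)
      = ∑ n ∈ range q, ∑ c ∈ k.divisors,
          (if c ∣ n then ((ArithmeticFunction.moebius c : ℤ):ℂ) * (χ ((n : ZMod d)) * e ((n:ℝ)/q)) else 0) := by
        refine sum_congr rfl fun n _ => ?_
        rw [step1 n, ← moebius_divisor_sum (Nat.gcd n k), hdivs n, mul_assoc,
          Finset.sum_mul, Finset.sum_filter]
    _ = ∑ c ∈ k.divisors, ((ArithmeticFunction.moebius c : ℤ):ℂ) *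
          ∑ n ∈ (range q).filter (c ∣ ·), χ ((n : ZMod d)) * e ((n:ℝ)/q) := by
        rw [Finset.sum_comm]
        refine sum_congr rfl fun c _ => ?_
        rw [Finset.mul_sum, ← Finset.sum_filter]
    _ = ∑ c ∈ k.divisors, ((ArithmeticFunction.moebius c : ℤ):ℂ) * χ ((c : ZMod d)) *
          ∑ m ∈ range (q / c), χ ((m : ZMod d)) * e ((m:ℝ)/(q/c : ℕ)) := by
        refine sum_congr rfl fun c hc => ?_
        obtain ⟨hck, -⟩ := Nat.mem_divisors.mp hc
        have hc0 : 0 < c := Nat.pos_of_mem_divisors hc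
        have hkq : k ∣ q := ⟨d, by rw [hq]; ring⟩
        have hcq : c ∣ q := hck.trans hkq
        rw [sum_dvd_reindex q c hc0 hcq]
        have hpt : ∀ m ∈ range (q / c), χ (((c*m : ℕ) : ZMod d)) * e (((c*m : ℕ):ℝ)/q)
            = χ ((c : ZMod d)) * (χ ((m : ZMod d)) * e ((m:ℝ)/(q/c : ℕ))) := by
          intro m _
          have h1 : ((c * m : ℕ) : ZMod d) = (c : ZMod d) * (m : ZMod d) := by push_cast; ring
          have h2 : ((c*m : ℕ):ℝ)/(q:ℝ) = (m:ℝ)/((q/c : ℕ):ℝ) := by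
            have hqc : q = c * (q / c) := (Nat.mul_div_cancel' hcq).symm
            have hc' : (c:ℝ) ≠ 0 := Nat.cast_ne_zero.mpr hc0.ne'
            have hqc0 : 0 < q / c := Nat.div_pos (Nat.le_of_dvd hq0 hcq) hc0
            have hqc' : ((q/c : ℕ):ℝ) ≠ 0 := Nat.cast_ne_zero.mpr hqc0.ne'
            rw [show ((q:ℕ):ℝ) = (c:ℝ) * ((q/c : ℕ):ℝ) by exact_mod_cast congrArg (Nat.cast : ℕ → ℝ) hqc]
            push_cast
            field_simp
          rw [h1, h2, map_mul]
          ring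
        rw [sum_congr rfl hpt, ← Finset.mul_sum, ← mul_assoc]
    _ = ((ArithmeticFunction.moebius k : ℤ):ℂ) * χ ((k : ZMod d)) *
          ∑ m ∈ range d, χ ((m : ZMod d)) * e ((m:ℝ)/d) := by
        rw [Finset.sum_eq_single k]
        · rw [show q / k = d by rw [hq, Nat.mul_div_cancel _ hk0]]
        · intro c hc hck
          obtain ⟨hckdvd, -⟩ := Nat.mem_divisors.mp hc
          have hc0 : 0 < c := Nat.pos_of_mem_divisors hc
          obtain ⟨j, hj⟩ := hckdvd
          have hj2 : 2 ≤ j := by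
            have hj0 : j ≠ 0 := by rintro rfl; simp at hj; omega
            have hj1 : j ≠ 1 := by rintro rfl; simp at hj; exact hck hj.symm
            omega
          have hqc : q / c = d * j := by
            rw [hq, hj, show d * (c * j) = c * (d * j) by ring, Nat.mul_div_cancel_left _ hc0]
          have hdvd : d ∣ q / c := ⟨j, hqc⟩
          have hlt : d < q / c := by
            rw [hqc]
            exact (Nat.lt_mul_iff_one_lt_right hd0).mpr hj2
          rw [sum_block χ hdvd hlt, mul_zero]
        · intro hkk
          exact absurd (Nat.mem_divisors_self k hk0.ne') hkk
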